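/- Suppose the sub-order ≺_{s,k} coincides with ≺_m. If p_1 and p_2 are TRP pairs whose signatures both have index k, such that sig(p_1) divides sig(p_2) and lm(p_1) divides lm(p_2), then p_1 ∼ p_2. -/

import Mathlib

namespace TRB

open MvPolynomial
open scoped Classical

/-- Monomials in the variables `x₁, …, xₙ`, identified with their exponent vectors;
a monomial `m₁` divides `m₂` iff the exponent vector of `m₁` is componentwise `≤`. -/
abbrev Mon (n : ℕ) := Fin n →₀ ℕ

/-- Module monomials (signatures) `x^α E_i` of the free module `P^d`. -/
abbrev Sig (n d : ℕ) := Mon n × Fin d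

/-- The action of a monomial on a module monomial: `m • (x^α E_i) = (m x^α) E_i`. -/
noncomputable def Sig.smul {n d : ℕ} (m : Mon n) (s : Sig n d) : Sig n d := (m + s.1, s.2)

/-- An admissible monomial order on the monomials of `P = K[x₁,…,xₙ]`:
a (strict) linear order such that `1 ⪯ m` for every monomial `m`, and
multiplication by a monomial is strictly monotone. -/
structure MonOrder (n : ℕ) where
  lt : Mon n → Mon n → Prop
  irrefl : ∀ a, ¬ lt a a
  trans : ∀ a b c, lt a b → lt b c → lt a c
  total : ∀ a b, lt a b ∨ a = b ∨ lt b a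
  zero_lt : ∀ a, a ≠ 0 → lt 0 a
  mul_lt_mul : ∀ (m a b : Mon n), lt a b → lt (m + a) (m + b)

/-- An admissible signature order on module monomials:
a (strict) linear order with `s ⪯ m • s` for every monomial `m`, and such that
multiplication by a monomial is strictly monotone. -/
structure SigOrder (n d : ℕ) where
  lt : Sig n d → Sig n d → Prop
  irrefl : ∀ s, ¬ lt s s
  trans : ∀ s t r, lt s t → lt t r → lt s r
  total : ∀ s t, lt s t ∨ s = t ∨ lt t s
  le_smul : ∀ (m : Mon n) (s : Sig n d), s = Sig.smul m s ∨ lt s (Sig.smul m s)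
  smul_lt_smul : ∀ (m : Mon n) (s t : Sig n d), lt s t → lt (Sig.smul m s) (Sig.smul m t)

/-- Non-strict version of a monomial order. -/
def MonOrder.le {n : ℕ} (mo : MonOrder n) (a b : Mon n) : Prop := mo.lt a b ∨ a = b

/-- Non-strict version of a signature order. -/
def SigOrder.le {n d : ℕ} (so : SigOrder n d) (s t : Sig n d) : Prop := so.lt s t ∨ s = t

/-- The `≺_m`-leading monomial of a polynomial (junk value `0` on the zero polynomial). -/
noncomputable def MonOrder.lm {n : ℕ} {K : Type*} [CommSemiring K] (mo : MonOrder n)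
    (v : MvPolynomial (Fin n) K) : Mon n :=
  if h : ∃ m ∈ v.support, ∀ m' ∈ v.support, m' ≠ m → mo.lt m' m then h.choose else 0

/-- The signature of a module element `u ∈ P^d`: the `≺_s`-largest module monomial
`x^α E_i` whose coefficient in `u` is nonzero (junk value on `u = 0`). -/
noncomputable def SigOrder.sig {n d : ℕ} [NeZero d] {K : Type*} [CommSemiring K]
    (so : SigOrder n d) (u : Fin d → MvPolynomial (Fin n) K) : Sig n d :=
  if h : ∃ s : Sig n d, (u s.2).coeff s.1 ≠ 0 ∧
      ∀ t : Sig n d, (u t.2).coeff t.1 ≠ 0 → t ≠ s → so.lt t s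
  then h.choose else (0, ⟨0, Nat.pos_of_ne_zero (NeZero.ne d)⟩)

/-- The ambient type of candidate pairs `(u, v) ∈ P^d × P`. -/
abbrev PairT (K : Type*) [CommSemiring K] (n d : ℕ) :=
  (Fin d → MvPolynomial (Fin n) K) × MvPolynomial (Fin n) K

variable {K : Type*} [Field K] {n d : ℕ}

/-- `(u, v)` is a pair (w.r.t. the input `f`) if `u ⬝ f = Σ_i u_i f_i = v`. -/
def IsPair (f : Fin d → MvPolynomial (Fin n) K) (p : PairT K n d) : Prop :=
  ∑ i, p.1 i * f i = p.2

/-- Leading monomial of a pair: `lm p = lm v`. -/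
noncomputable def lmP (mo : MonOrder n) (p : PairT K n d) : Mon n := mo.lm p.2

/-- Signature of a pair: `sig p = sig u`. -/
noncomputable def sigP [NeZero d] (so : SigOrder n d) (p : PairT K n d) : Sig n d :=
  so.sig p.1

/-- The pair order: `p ≺_p q` iff `lm(p)·sig(q) ≺_s lm(q)·sig(p)`. -/
def PairLt [NeZero d] (mo : MonOrder n) (so : SigOrder n d) (p q : PairT K n d) : Prop :=
  so.lt (Sig.smul (lmP mo p) (sigP so q)) (Sig.smul (lmP mo q) (sigP so p))

/-- Pairs are similar if `lm(p)·sig(q) = lm(q)·sig(p)`. -/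
def Similar [NeZero d] (mo : MonOrder n) (so : SigOrder n d) (p q : PairT K n d) : Prop :=
  Sig.smul (lmP mo p) (sigP so q) = Sig.smul (lmP mo q) (sigP so p)

/-- `p ⪯_p q`. -/
def PairLE [NeZero d] (mo : MonOrder n) (so : SigOrder n d) (p q : PairT K n d) : Prop :=
  PairLt mo so p q ∨ Similar mo so p q

/-- Pairs are equivalent if they have the same signature and the same leading monomial. -/
def Equivalent [NeZero d] (mo : MonOrder n) (so : SigOrder n d) (p q : PairT K n d) : Prop :=
  sigP so p = sigP so q ∧ lmP mo p = lmP mo q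

/-- `p` is top reducible by `q`: both non-syzygy, `p ≺_p q` and `lm(q) ∣ lm(p)`. -/
def TopRed [NeZero d] (mo : MonOrder n) (so : SigOrder n d) (p q : PairT K n d) : Prop :=
  p.2 ≠ 0 ∧ q.2 ≠ 0 ∧ PairLt mo so p q ∧ lmP mo q ≤ lmP mo p

/-- A TRP pair: a non-syzygy pair that is top reducible by no pair. -/
def IsTRP [NeZero d] (f : Fin d → MvPolynomial (Fin n) K) (mo : MonOrder n)
    (so : SigOrder n d) (p : PairT K n d) : Prop :=
  IsPair f p ∧ p.2 ≠ 0 ∧ ∀ q : PairT K n d, IsPair f q → ¬ TopRed mo so p q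

/-- Divisibility of signatures: `x^α E_i ∣ x^β E_j` iff `i = j` and `x^α ∣ x^β`. -/
def SigDvd {n d : ℕ} (s t : Sig n d) : Prop := s.2 = t.2 ∧ s.1 ≤ t.1

/-- A TRB pair: a TRP pair `p` such that no TRP pair similar to `p` has signature
properly dividing `sig p`. -/
def IsTRB [NeZero d] (f : Fin d → MvPolynomial (Fin n) K) (mo : MonOrder n)
    (so : SigOrder n d) (p : PairT K n d) : Prop :=
  IsTRP f mo so p ∧ ∀ q : PairT K n d, IsTRP f mo so q → Similar mo so p q →
    SigDvd (sigP so q) (sigP so p) → sigP so q = sigP so p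

/-- A signature is syzygy if it is the signature of a syzygy pair `(u, 0)`, `u ≠ 0`. -/
def IsSyzygySig [NeZero d] (f : Fin d → MvPolynomial (Fin n) K) (so : SigOrder n d)
    (s : Sig n d) : Prop :=
  ∃ u : Fin d → MvPolynomial (Fin n) K, u ≠ 0 ∧ IsPair f (u, 0) ∧ so.sig u = s

/-- The sub-order `≺_{s,i}` on monomials: `x^α ≺_{s,i} x^β` iff `x^α E_i ≺_s x^β E_i`. -/
def SubOrder {n d : ℕ} (so : SigOrder n d) (i : Fin d) (a b : Mon n) : Prop :=
  so.lt (a, i) (b, i)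

/-- The sub-order `≺_{s,i}` coincides with `≺_m`. -/
def EqOrders {n d : ℕ} (so : SigOrder n d) (mo : MonOrder n) (i : Fin d) : Prop :=
  ∀ a b : Mon n, SubOrder so i a b ↔ mo.lt a b

/-- `≺_m` and `≺_s` are almost compatible: either every sub-order `≺_{s,i}` coincides
with `≺_m`, or there is exactly one index `k` with `≺_{s,k} ≠ ≺_m`, and this `k`
satisfies `x^α E_k ≺_s E_i` for every monomial `x^α` and every index `i ≠ k`. -/
def AlmostCompatible {n d : ℕ} (mo : MonOrder n) (so : SigOrder n d) : Prop :=
  (∀ i, EqOrders so mo i) ∨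
  (∃ k, ¬ EqOrders so mo k ∧ (∀ i, i ≠ k → EqOrders so mo i) ∧
    ∀ (a : Mon n) (i : Fin d), i ≠ k → so.lt (a, k) ((0 : Mon n), i))

/-- `≺_m` and `≺_s` are compatible: `s₁ ⪯_s s₂` and `m₁ ⪯_m m₂` imply
`m₁·s₁ ⪯_s m₂·s₂`, with equality only when `s₁ = s₂` and `m₁ = m₂`. -/
def Compatible {n d : ℕ} (mo : MonOrder n) (so : SigOrder n d) : Prop :=
  ∀ (s₁ s₂ : Sig n d) (m₁ m₂ : Mon n), so.le s₁ s₂ → mo.le m₁ m₂ →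
    so.le (Sig.smul m₁ s₁) (Sig.smul m₂ s₂) ∧
    (Sig.smul m₁ s₁ = Sig.smul m₂ s₂ → s₁ = s₂ ∧ m₁ = m₂)

/-- The multiplied pair `m·p = (X^m · u, X^m · v)`. -/
noncomputable def mulPair (m : Mon n) (p : PairT K n d) : PairT K n d :=
  (fun i => monomial m (1 : K) * p.1 i, monomial m (1 : K) * p.2)

/-- `[m, p]` is the J-pair of the non-similar non-syzygy pairs `p₁, p₂`:
`p` is the `≺_p`-smaller of the two and `m·lm(p) = lcm(lm p₁, lm p₂)`. -/
def IsJPair [NeZero d] (mo : MonOrder n) (so : SigOrder n d) (p₁ p₂ : PairT K n d)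
    (m : Mon n) (p : PairT K n d) : Prop :=
  p₁.2 ≠ 0 ∧ p₂.2 ≠ 0 ∧ ¬ Similar mo so p₁ p₂ ∧
  ((PairLt mo so p₁ p₂ ∧ p = p₁) ∨ (PairLt mo so p₂ p₁ ∧ p = p₂)) ∧
  m + lmP mo p = lmP mo p₁ ⊔ lmP mo p₂

/-- `G` is a Gröbner basis of the ideal `⟨f₁,…,f_d⟩` w.r.t. `≺_m`: `G` consists of
elements of the ideal, and for every nonzero `v` in the ideal there is a nonzero
`g ∈ G` with `lm g ∣ lm v`. -/
def IsGroebnerBasis (mo : MonOrder n) (f : Fin d → MvPolynomial (Fin n) K)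
    (G : Set (MvPolynomial (Fin n) K)) : Prop :=
  (∀ g ∈ G, g ∈ Ideal.span (Set.range f)) ∧
  ∀ v ∈ Ideal.span (Set.range f), v ≠ 0 →
    ∃ g ∈ G, g ≠ 0 ∧ mo.lm g ≤ mo.lm v



section Aux

/-- Any nonempty finite set has a maximum w.r.t. a transitive total irreflexive relation. -/
lemma exists_max_rel {α : Type*} (lt : α → α → Prop)
    (htr : ∀ a b c, lt a b → lt b c → lt a c)
    (hto : ∀ a b, lt a b ∨ a = b ∨ lt b a)
    (s : Finset α) (hs : s.Nonempty) :
    ∃ m ∈ s, ∀ x ∈ s, x ≠ m → lt x m := by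
  classical
  induction s using Finset.induction_on with
  | empty => exact absurd hs (by simp)
  | @insert a s ha ih =>
    rcases s.eq_empty_or_nonempty with rfl | hsne
    · exact ⟨a, by simp, by simp⟩
    · obtain ⟨m, hm, hmax⟩ := ih hsne
      rcases hto a m with h | rfl | h
      · refine ⟨m, Finset.mem_insert_of_mem hm, ?_⟩
        intro x hx hxm
        rcases Finset.mem_insert.mp hx with rfl | hx
        · exact h
        · exact hmax x hx hxm
      · exact absurd hm ha
      · refine ⟨a, Finset.mem_insert_self a s, ?_⟩
        intro x hx hxa
        rcases Finset.mem_insert.mp hx with rfl | hx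
        · exact absurd rfl hxa
        · by_cases hxm : x = m
          · exact hxm ▸ h
          · exact htr _ _ _ (hmax x hx hxm) h

variable {K : Type*} [Field K] {n d : ℕ}

lemma lm_spec (mo : MonOrder n) {v : MvPolynomial (Fin n) K} (hv : v ≠ 0) :
    mo.lm v ∈ v.support ∧ ∀ m ∈ v.support, m ≠ mo.lm v → mo.lt m (mo.lm v) := by
  have hne : v.support.Nonempty :=
    Finset.nonempty_iff_ne_empty.mpr (fun h => hv (MvPolynomial.support_eq_empty.mp h))
  have h : ∃ m ∈ v.support, ∀ m' ∈ v.support, m' ≠ m → mo.lt m' m :=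
    exists_max_rel mo.lt mo.trans mo.total _ hne
  rw [MonOrder.lm, dif_pos h]
  exact h.choose_spec

lemma lm_eq (mo : MonOrder n) {v : MvPolynomial (Fin n) K} (hv : v ≠ 0) {m : Mon n}
    (h1 : m ∈ v.support) (h2 : ∀ m' ∈ v.support, m' ≠ m → mo.lt m' m) : mo.lm v = m := by
  by_contra hne
  obtain ⟨hmem, hmax⟩ := lm_spec mo hv
  exact mo.irrefl _ (mo.trans _ _ _ (h2 _ hmem hne) (hmax _ h1 (fun h => hne h.symm)))

lemma sig_spec [NeZero d] (so : SigOrder n d) {u : Fin d → MvPolynomial (Fin n) K}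
    (hu : u ≠ 0) :
    (u (so.sig u).2).coeff (so.sig u).1 ≠ 0 ∧
    ∀ t : Sig n d, (u t.2).coeff t.1 ≠ 0 → t ≠ so.sig u → so.lt t (so.sig u) := by
  classical
  set S : Finset (Sig n d) :=
    (Finset.univ : Finset (Fin d)).biUnion
      (fun i => (u i).support.image (fun m => ((m, i) : Sig n d))) with hS
  have hmem : ∀ t : Sig n d, t ∈ S ↔ (u t.2).coeff t.1 ≠ 0 := by
    intro t
    simp only [hS, Finset.mem_biUnion, Finset.mem_univ, true_and, Finset.mem_image,
      MvPolynomial.mem_support_iff]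
    constructor
    · rintro ⟨i, a, h, rfl⟩; exact h
    · intro h; exact ⟨t.2, t.1, h, rfl⟩
  have hne : S.Nonempty := by
    obtain ⟨i, hi⟩ := Function.ne_iff.mp hu
    have : (u i).support.Nonempty :=
      Finset.nonempty_iff_ne_empty.mpr (fun h => hi (MvPolynomial.support_eq_empty.mp h))
    obtain ⟨m, hm⟩ := this
    exact ⟨(m, i), (hmem (m, i)).mpr (MvPolynomial.mem_support_iff.mp hm)⟩
  obtain ⟨m, hm, hmax⟩ := exists_max_rel so.lt so.trans so.total S hne
  have h : ∃ s : Sig n d, (u s.2).coeff s.1 ≠ 0 ∧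
      ∀ t : Sig n d, (u t.2).coeff t.1 ≠ 0 → t ≠ s → so.lt t s :=
    ⟨m, (hmem m).mp hm, fun t ht htm => hmax t ((hmem t).mpr ht) htm⟩
  rw [SigOrder.sig, dif_pos h]
  exact h.choose_spec

/-- Cancellation for monomial orders. -/
lemma mo_lt_of_add_lt (mo : MonOrder n) {m a b : Mon n} (h : mo.lt (m + a) (m + b)) :
    mo.lt a b := by
  rcases mo.total a b with h' | rfl | h'
  · exact h'
  · exact absurd h (mo.irrefl _)
  · exact absurd (mo.trans _ _ _ h (mo.mul_lt_mul m b a h')) (mo.irrefl _)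

/-- If every monomial of `w` is `≺` the leading monomial of `v`, then `v - w` is nonzero
with the same leading monomial as `v`. -/
lemma lm_sub (mo : MonOrder n) {v w : MvPolynomial (Fin n) K} (hv : v ≠ 0)
    (hw : ∀ m ∈ w.support, mo.lt m (mo.lm v)) :
    v - w ≠ 0 ∧ mo.lm (v - w) = mo.lm v := by
  obtain ⟨hmem, hmax⟩ := lm_spec mo hv
  have hwlm : w.coeff (mo.lm v) = 0 := by
    by_contra h
    exact mo.irrefl _ (hw _ (MvPolynomial.mem_support_iff.mpr h))
  have hcoeff : (v - w).coeff (mo.lm v) ≠ 0 := by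
    rw [MvPolynomial.coeff_sub, hwlm, sub_zero]
    exact MvPolynomial.mem_support_iff.mp hmem
  have hne : v - w ≠ 0 := fun h => hcoeff (by rw [h, MvPolynomial.coeff_zero])
  refine ⟨hne, lm_eq mo hne (MvPolynomial.mem_support_iff.mpr hcoeff) ?_⟩
  intro m' hm' hne'
  have : v.coeff m' ≠ 0 ∨ w.coeff m' ≠ 0 := by
    by_contra h
    push_neg at h
    have := MvPolynomial.mem_support_iff.mp hm'
    rw [MvPolynomial.coeff_sub, h.1, h.2, sub_zero] at this
    exact this rfl
  rcases this with h | h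
  · exact hmax _ (MvPolynomial.mem_support_iff.mpr h) hne'
  · exact hw _ (MvPolynomial.mem_support_iff.mpr h)

lemma mem_support_monomial_mul {b m : Mon n} {p : MvPolynomial (Fin n) K}
    (h : (MvPolynomial.monomial b (1 : K) * p).coeff m ≠ 0) :
    ∃ m', m = b + m' ∧ p.coeff m' ≠ 0 := by
  rw [MvPolynomial.coeff_monomial_mul'] at h
  split_ifs at h with hle
  · exact ⟨m - b, by rw [add_comm, tsub_add_cancel_of_le hle], fun h0 => h (by rw [h0, mul_zero])⟩
  · exact absurd rfl h

end Aux

/-- Suppose the sub-order `≺_{s,k}` coincides with `≺_m`. If `p₁` and `p₂`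
are TRP pairs whose signatures both have index `k`, such that `sig p₁` divides `sig p₂`
and `lm p₁` divides `lm p₂`, then `p₁ ∼ p₂`. -/
theorem TRP_dvd_similar_of_eqOrders {K : Type*} [Field K] {n d : ℕ} [NeZero d]
    (mo : MonOrder n) (so : SigOrder n d) (f : Fin d → MvPolynomial (Fin n) K)
    (k : Fin d) (hk : EqOrders so mo k)
    (p₁ p₂ : PairT K n d) (h1 : IsTRP f mo so p₁) (h2 : IsTRP f mo so p₂)
    (hi1 : (sigP so p₁).2 = k) (hi2 : (sigP so p₂).2 = k)
    (hsd : SigDvd (sigP so p₁) (sigP so p₂)) (hld : lmP mo p₁ ≤ lmP mo p₂) :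
    Similar mo so p₁ p₂ := by
  obtain ⟨hp1, hv1, htrp1⟩ := h1
  obtain ⟨hp2, hv2, htrp2⟩ := h2
  have hp1' : ∑ i, p₁.1 i * f i = p₁.2 := hp1
  have hp2' : ∑ i, p₂.1 i * f i = p₂.2 := hp2
  have hu1 : p₁.1 ≠ 0 := by
    intro h
    apply hv1
    rw [← hp1', h]
    simp
  have hu2 : p₂.1 ≠ 0 := by
    intro h
    apply hv2
    rw [← hp2', h]
    simp
  set s1 := sigP so p₁ with hs1d
  set s2 := sigP so p₂ with hs2d
  have e1 : so.sig p₁.1 = s1 := hs1d.symm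
  have e2 : so.sig p₂.1 = s2 := hs2d.symm
  have hsd' : s1.2 = s2.2 ∧ s1.1 ≤ s2.1 := hsd
  rcases so.total (Sig.smul (lmP mo p₁) s2) (Sig.smul (lmP mo p₂) s1) with hlt | heq | hgt
  · -- p₁ ≺_p p₂ : build a reducer of p₂, contradiction with TRP of p₂
    exfalso
    set b := s2.1 - s1.1 with hbdef
    have hb : b + s1.1 = s2.1 := by
      rw [hbdef]
      exact tsub_add_cancel_of_le hsd'.2
    -- convert hlt to the monomial order
    have hsm1 : Sig.smul (lmP mo p₁) s2 = ((lmP mo p₁ + s2.1, k) : Sig n d) :=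
      Prod.ext rfl hi2
    have hsm2 : Sig.smul (lmP mo p₂) s1 = ((lmP mo p₂ + s1.1, k) : Sig n d) :=
      Prod.ext rfl hi1
    rw [hsm1, hsm2] at hlt
    have hmo0 : mo.lt (lmP mo p₁ + s2.1) (lmP mo p₂ + s1.1) := (hk _ _).mp hlt
    have e3 : lmP mo p₁ + s2.1 = s1.1 + (b + lmP mo p₁) := by rw [← hb]; abel
    have e4 : lmP mo p₂ + s1.1 = s1.1 + lmP mo p₂ := add_comm _ _
    rw [e3, e4] at hmo0
    have hmo1 : mo.lt (b + lmP mo p₁) (lmP mo p₂) := mo_lt_of_add_lt mo hmo0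
    -- leading coefficients of the signatures
    have hc1 : (p₁.1 k).coeff s1.1 ≠ 0 := by
      have h := (sig_spec so hu1).1
      rw [e1, hi1] at h
      exact h
    have hc2 : (p₂.1 k).coeff s2.1 ≠ 0 := by
      have h := (sig_spec so hu2).1
      rw [e2, hi2] at h
      exact h
    have hmax1 : ∀ t : Sig n d, (p₁.1 t.2).coeff t.1 ≠ 0 → t ≠ s1 → so.lt t s1 := by
      have h := (sig_spec so hu1).2
      rw [e1] at h
      exact h
    have hmax2 : ∀ t : Sig n d, (p₂.1 t.2).coeff t.1 ≠ 0 → t ≠ s2 → so.lt t s2 := by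
      have h := (sig_spec so hu2).2
      rw [e2] at h
      exact h
    set c := (p₂.1 k).coeff s2.1 / (p₁.1 k).coeff s1.1 with hcdef
    set w2 : MvPolynomial (Fin n) K :=
      MvPolynomial.C c * (MvPolynomial.monomial b (1 : K) * p₁.2) with hw2
    set uf : Fin d → MvPolynomial (Fin n) K :=
      fun i => p₂.1 i - MvPolynomial.C c * (MvPolynomial.monomial b (1 : K) * p₁.1 i) with huf
    -- the reducer is a pair
    have hpair : IsPair f (uf, p₂.2 - w2) := by
      show ∑ i, uf i * f i = p₂.2 - w2
      simp only [huf, hw2]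
      calc ∑ i, (p₂.1 i - MvPolynomial.C c * (MvPolynomial.monomial b (1 : K) * p₁.1 i)) * f i
          = ∑ i, (p₂.1 i * f i
              - (MvPolynomial.C c * (MvPolynomial.monomial b (1 : K) * p₁.1 i)) * f i) := by
            refine Finset.sum_congr rfl ?_
            intros; ring
        _ = ∑ i, p₂.1 i * f i
              - ∑ i, (MvPolynomial.C c * (MvPolynomial.monomial b (1 : K) * p₁.1 i)) * f i :=
            Finset.sum_sub_distrib _ _
        _ = p₂.2 - MvPolynomial.C c * (MvPolynomial.monomial b (1 : K) * p₁.2) := by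
            rw [hp2']
            congr 1
            rw [Finset.sum_congr rfl
              (fun i _ => by ring :
                ∀ i ∈ (Finset.univ : Finset (Fin d)),
                  (MvPolynomial.C c * (MvPolynomial.monomial b (1 : K) * p₁.1 i)) * f i
                  = MvPolynomial.C c * (MvPolynomial.monomial b (1 : K) * (p₁.1 i * f i))),
              ← Finset.mul_sum, ← Finset.mul_sum, hp1']
    -- the v-part keeps the leading monomial of p₂
    have hwlt : ∀ m ∈ w2.support, mo.lt m (mo.lm p₂.2) := by
      intro m hm
      have hm' := MvPolynomial.mem_support_iff.mp hm
      rw [hw2, MvPolynomial.coeff_C_mul] at hm'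
      have hm'' := right_ne_zero_of_mul hm'
      obtain ⟨m', rfl, hm2⟩ := mem_support_monomial_mul hm''
      rcases eq_or_ne m' (mo.lm p₁.2) with rfl | hne
      · exact hmo1
      · exact mo.trans _ _ _
          (mo.mul_lt_mul b _ _
            ((lm_spec mo hv1).2 m' (MvPolynomial.mem_support_iff.mpr hm2) hne)) hmo1
    obtain ⟨hrne, hlmr⟩ := lm_sub mo hv2 hwlt
    -- the u-part is nonzero
    have hufne : uf ≠ 0 := by
      intro h
      apply hrne
      have := hpair
      rw [show IsPair f (uf, p₂.2 - w2) = (∑ i, uf i * f i = p₂.2 - w2) from rfl, h] at this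
      rw [← this]
      simp
    -- the coefficient of the reducer at s2 vanishes
    have hmm : (MvPolynomial.monomial b (1 : K) * p₁.1 k).coeff s2.1
        = (p₁.1 k).coeff s1.1 := by
      rw [← hb, MvPolynomial.coeff_monomial_mul, one_mul]
    have hzero : (uf k).coeff s2.1 = 0 := by
      simp only [huf]
      rw [MvPolynomial.coeff_sub, MvPolynomial.coeff_C_mul, hmm, hcdef,
        div_mul_cancel₀ _ hc1, sub_self]
    have hbs1 : Sig.smul b s1 = s2 := Prod.ext hb (hi1.trans hi2.symm)
    -- the reducer has signature strictly smaller than s2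
    have hall : ∀ t : Sig n d, (uf t.2).coeff t.1 ≠ 0 → so.lt t s2 := by
      intro t ht
      have htne : t ≠ s2 := by
        intro h
        rw [h, hi2] at ht
        exact ht hzero
      simp only [huf] at ht
      by_cases hA : (p₂.1 t.2).coeff t.1 = 0
      · have hB : (MvPolynomial.C c * (MvPolynomial.monomial b (1 : K) * p₁.1 t.2)).coeff t.1
            ≠ 0 := by
          intro h0
          apply ht
          rw [MvPolynomial.coeff_sub, hA, h0, sub_zero]
        rw [MvPolynomial.coeff_C_mul] at hB
        have hB' := right_ne_zero_of_mul hB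
        obtain ⟨m', ht1, hm'⟩ := mem_support_monomial_mul hB'
        rcases eq_or_ne ((m', t.2) : Sig n d) s1 with he | hne
        · exfalso
          apply htne
          have h2' : t.2 = s1.2 := by rw [← he]
          have h1' : m' = s1.1 := by rw [← he]
          refine Prod.ext ?_ ?_
          · rw [ht1, h1', hb]
          · rw [h2', hi1, ← hi2]
        · have hlt' := so.smul_lt_smul b _ _ (hmax1 (m', t.2) hm' hne)
          have et : Sig.smul b ((m', t.2) : Sig n d) = t := Prod.ext ht1.symm rfl
          rw [et, hbs1] at hlt'
          exact hlt'
      · exact hmax2 t hA htne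
    have hsiglt : so.lt (so.sig uf) s2 := hall _ (sig_spec so hufne).1
    -- p₂ is top reducible by the reducer: contradiction
    have hlm' : lmP mo (uf, p₂.2 - w2) = lmP mo p₂ := hlmr
    have hplt : PairLt mo so p₂ (uf, p₂.2 - w2) := by
      show so.lt (Sig.smul (lmP mo p₂) (sigP so (uf, p₂.2 - w2)))
        (Sig.smul (lmP mo (uf, p₂.2 - w2)) (sigP so p₂))
      rw [hlm', ← hs2d]
      exact so.smul_lt_smul _ _ _ hsiglt
    exact htrp2 (uf, p₂.2 - w2) hpair ⟨hv2, hrne, hplt, le_of_eq hlm'⟩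
  · show Sig.smul (lmP mo p₁) (sigP so p₂) = Sig.smul (lmP mo p₂) (sigP so p₁)
    rw [← hs1d, ← hs2d]
    exact heq
  · -- p₂ ≺_p p₁ : p₂ is top reducible by p₁, contradiction
    exfalso
    rw [hs1d, hs2d] at hgt
    exact htrp2 p₁ hp1 ⟨hv2, hv1, hgt, hld⟩

end TRB
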